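/- Let F be a differential field of characteristic zero with algebraically closed field of constants C, and let E be a Picard-Vessiot extension of F whose differential Galois group is unipotent. Then the Picard-Vessiot ring T(E|F) = {x ∈ E : L(x) = 0 for some L ∈ F[∂]} equals the set of all generalized iterated integrals of F contained in E. -/
import Mathlib

/-- The differential operator `L_f = f₁ ∂ f₂ ∂ ⋯ f_l ∂` applied to `η`. -/
def Lop {E : Type*} [Field E] (D : E → E) : List E → E → E
  | [], η => η
  | f :: fs, η => f * D (Lop D fs η)

/-- `η` is a generalized iterated integral of `F` (inside `E`). -/
def IsGenIterInt {F E : Type*} [Field F] [Field E] [Algebra F E]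
    (D : E → E) (η : E) : Prop :=
  ∃ fs : List F, fs ≠ [] ∧ (∀ f ∈ fs, f ≠ 0) ∧
    Lop D (fs.map (algebraMap F E)) η = 0

/-- `e` lies in the Picard-Vessiot ring `T(E|F)`: it is annihilated by a monic
linear differential operator over `F`. -/
def InPVRing {F E : Type*} [Field F] [Field E] [Algebra F E]
    (DF : F → F) (DE : E → E) (e : E) : Prop :=
  ∃ (k : ℕ) (a : Fin (k + 1) → F), a (Fin.last k) = 1 ∧
    ∑ i : Fin (k + 1), algebraMap F E (a i) * DE^[(i : ℕ)] e = 0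

section Aux

variable {F E : Type*} [Field F] [Field E] [Algebra F E]

theorem Lop_append (D : E → E) (xs ys : List E) (η : E) :
    Lop D (xs ++ ys) η = Lop D xs (Lop D ys η) := by
  induction xs with
  | nil => rfl
  | cons x xs ih => simp only [List.cons_append, Lop, List.append_eq, ih]

/-- Flags of `F`-submodules of `E` witnessing "unipotence": built from `⊥` by
successively adjoining a vector whose derivative lies in the previous stage. -/
inductive UF (F : Type*) {E : Type*} [Field F] [Field E] [Algebra F E] (DE : E → E) :
    Submodule F E → Prop
  | bot : UF F DE ⊥
  | step (W : Submodule F E) (v : E) : UF F DE W → DE v ∈ W →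
      UF F DE (W ⊔ Submodule.span F {v})

variable (DF : F → F) (DE : E → E)

theorem DE_zero (hEadd : ∀ a b : E, DE (a + b) = DE a + DE b) : DE 0 = 0 := by
  have h := hEadd 0 0
  rw [add_zero] at h
  have : DE 0 + 0 = DE 0 + DE 0 := by rw [add_zero]; exact h
  exact (add_left_cancel this).symm

theorem DE_one (hEmul : ∀ a b : E, DE (a * b) = a * DE b + DE a * b) : DE 1 = 0 := by
  have h := hEmul 1 1
  rw [mul_one, one_mul, mul_one] at h
  have : DE 1 + 0 = DE 1 + DE 1 := by rw [add_zero]; exact h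
  exact (add_left_cancel this).symm

theorem DE_smul (hEmul : ∀ a b : E, DE (a * b) = a * DE b + DE a * b)
    (hcompat : ∀ a : F, DE (algebraMap F E a) = algebraMap F E (DF a))
    (c : F) (x : E) : DE (c • x) = c • DE x + DF c • x := by
  simp only [Algebra.smul_def, hEmul, hcompat]

theorem UF_stable
    (hEadd : ∀ a b : E, DE (a + b) = DE a + DE b)
    (hEmul : ∀ a b : E, DE (a * b) = a * DE b + DE a * b)
    (hcompat : ∀ a : F, DE (algebraMap F E a) = algebraMap F E (DF a)) :
    ∀ W : Submodule F E, UF F DE W → ∀ x ∈ W, DE x ∈ W := by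
  intro W hW
  induction hW with
  | bot =>
      intro x hx
      rw [Submodule.mem_bot] at hx
      subst hx
      rw [DE_zero DE hEadd]
      exact Submodule.zero_mem _
  | step W v hW hDv ih =>
      intro x hx
      rw [Submodule.mem_sup] at hx
      obtain ⟨w, hw, y, hy, rfl⟩ := hx
      rw [Submodule.mem_span_singleton] at hy
      obtain ⟨c, rfl⟩ := hy
      rw [hEadd, DE_smul DF DE hEmul hcompat]
      refine add_mem (Submodule.mem_sup_left (ih w hw)) (add_mem ?_ ?_)
      · exact Submodule.mem_sup_left (Submodule.smul_mem _ _ hDv)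
      · exact Submodule.mem_sup_right
          (Submodule.smul_mem _ _ (Submodule.mem_span_singleton_self v))

theorem UF_sup {W₁ W₂ : Submodule F E} (h₁ : UF F DE W₁) (h₂ : UF F DE W₂) :
    UF F DE (W₁ ⊔ W₂) := by
  induction h₂ with
  | bot => simpa using h₁
  | step W v hW hDv ih =>
      rw [← sup_assoc]
      exact UF.step _ v ih (Submodule.mem_sup_right hDv)

theorem UF_mul (hEmul : ∀ a b : E, DE (a * b) = a * DE b + DE a * b)
    {W₁ W₂ : Submodule F E} (h₁ : UF F DE W₁) (h₂ : UF F DE W₂) :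
    UF F DE (W₁ * W₂) := by
  induction h₁ with
  | bot => simpa [Submodule.bot_mul] using UF.bot
  | step W v hW hDv ih =>
      have key : ∀ U : Submodule F E, UF F DE U → U ≤ W₂ →
          UF F DE (W * W₂ ⊔ Submodule.span F {v} * U) := by
        intro U hU
        induction hU with
        | bot => intro _; simpa [Submodule.mul_bot] using ih
        | step U u hU hDu ihU =>
            intro hle
            have hUle : U ≤ W₂ := le_trans le_sup_left hle
            have h1 : UF F DE (W * W₂ ⊔ Submodule.span F {v} * U) := ihU hUle
            have hmem : DE (v * u) ∈ W * W₂ ⊔ Submodule.span F {v} * U := by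
              rw [hEmul]
              refine add_mem (Submodule.mem_sup_right ?_) (Submodule.mem_sup_left ?_)
              · exact Submodule.mul_mem_mul (Submodule.mem_span_singleton_self v) hDu
              · exact Submodule.mul_mem_mul hDv
                  (hle (Submodule.mem_sup_right (Submodule.mem_span_singleton_self u)))
            have h2 := UF.step _ (v * u) h1 hmem
            rw [Submodule.mul_sup, ← sup_assoc, Submodule.span_mul_span,
              Set.singleton_mul_singleton]
            exact h2
      have h3 := key W₂ h₂ le_rfl
      rwa [Submodule.sup_mul]

theorem UF_gii
    (hEadd : ∀ a b : E, DE (a + b) = DE a + DE b)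
    (hEmul : ∀ a b : E, DE (a * b) = a * DE b + DE a * b)
    (hcompat : ∀ a : F, DE (algebraMap F E a) = algebraMap F E (DF a)) :
    ∀ W : Submodule F E, UF F DE W → ∀ e ∈ W, IsGenIterInt (F := F) DE e := by
  intro W hW
  induction hW with
  | bot =>
      intro e he
      rw [Submodule.mem_bot] at he
      subst he
      exact ⟨[1], by simp, by simp, by simp [Lop, DE_zero DE hEadd]⟩
  | step W v hW hDv ih =>
      intro e he
      rw [Submodule.mem_sup] at he
      obtain ⟨w, hw, y, hy, rfl⟩ := he
      rw [Submodule.mem_span_singleton] at hy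
      obtain ⟨c, rfl⟩ := hy
      have hstab := UF_stable DF DE hEadd hEmul hcompat W hW
      have hDe : DE (w + c • v) = (DE w + c • DE v) + DF c • v := by
        rw [hEadd, DE_smul DF DE hEmul hcompat, ← add_assoc]
      have hw₂W : DE w + c • DE v ∈ W :=
        add_mem (hstab w hw) (Submodule.smul_mem _ _ hDv)
      by_cases h0 : DF c = 0
      · have hDeW : DE (w + c • v) = DE w + c • DE v := by
          rw [hDe, h0, zero_smul, add_zero]
        obtain ⟨fs, hne, hnz, hL⟩ := ih _ hw₂W
        refine ⟨fs ++ [1], by simp, ?_, ?_⟩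
        · intro f hf
          rcases List.mem_append.mp hf with h | h
          · exact hnz f h
          · simp only [List.mem_singleton] at h
            subst h; exact one_ne_zero
        · rw [List.map_append, Lop_append]
          show Lop DE (fs.map (algebraMap F E))
            (algebraMap F E 1 * DE (Lop DE [] (w + c • v))) = 0
          rw [map_one, one_mul]
          show Lop DE (fs.map (algebraMap F E)) (DE (w + c • v)) = 0
          rw [hDeW]
          exact hL
      · have hDs : DE (v + (DF c)⁻¹ • (DE w + c • DE v)) ∈ W := by
          rw [hEadd, DE_smul DF DE hEmul hcompat]
          exact add_mem hDv (add_mem (Submodule.smul_mem _ _ (hstab _ hw₂W))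
            (Submodule.smul_mem _ _ hw₂W))
        obtain ⟨gs, hne, hnz, hL⟩ := ih _ hDs
        refine ⟨gs ++ [1, (DF c)⁻¹], by simp, ?_, ?_⟩
        · intro f hf
          rcases List.mem_append.mp hf with h | h
          · exact hnz f h
          · simp only [List.mem_cons, List.mem_singleton, List.not_mem_nil, or_false] at h
            rcases h with h | h
            · subst h; exact one_ne_zero
            · subst h; exact inv_ne_zero h0
        · rw [List.map_append, Lop_append]
          have hkey : Lop DE ([1, (DF c)⁻¹].map (algebraMap F E)) (w + c • v)
              = DE (v + (DF c)⁻¹ • (DE w + c • DE v)) := by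
            show algebraMap F E 1 *
              DE (algebraMap F E (DF c)⁻¹ * DE (Lop DE [] (w + c • v))) = _
            rw [map_one, one_mul]
            congr 1
            show algebraMap F E (DF c)⁻¹ * DE (w + c • v) = _
            rw [hDe, ← Algebra.smul_def, smul_add, smul_smul, inv_mul_cancel₀ h0, one_smul]
            exact add_comm _ _
          rw [hkey]
          exact hL

theorem Lop_expand
    (hFadd : ∀ a b : F, DF (a + b) = DF a + DF b)
    (hEadd : ∀ a b : E, DE (a + b) = DE a + DE b)
    (hEmul : ∀ a b : E, DE (a * b) = a * DE b + DE a * b)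
    (hcompat : ∀ a : F, DE (algebraMap F E a) = algebraMap F E (DF a)) :
    ∀ fs : List F, ∃ a : ℕ → F,
      a fs.length = fs.prod ∧ (∀ i, fs.length < i → a i = 0) ∧
      ∀ η : E, Lop DE (fs.map (algebraMap F E)) η
        = ∑ i ∈ Finset.range (fs.length + 1), algebraMap F E (a i) * DE^[i] η := by
  have hDF0 : DF 0 = 0 := by
    have h := hFadd 0 0
    rw [add_zero] at h
    have : DF 0 + 0 = DF 0 + DF 0 := by rw [add_zero]; exact h
    exact (add_left_cancel this).symm
  have hDsum : ∀ (s : Finset ℕ) (g : ℕ → E), DE (∑ i ∈ s, g i) = ∑ i ∈ s, DE (g i) := by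
    intro s g
    induction s using Finset.cons_induction with
    | empty => simpa using DE_zero DE hEadd
    | cons i s hi ih => rw [Finset.sum_cons, hEadd, ih, Finset.sum_cons]
  intro fs
  induction fs with
  | nil =>
      refine ⟨fun i => if i = 0 then 1 else 0, by simp, ?_, ?_⟩
      · intro i hi
        simp only [List.length_nil] at hi
        simp [Nat.pos_iff_ne_zero.mp hi]
      · intro η
        simp [Lop]
  | cons f fs ih =>
      obtain ⟨a, ha1, ha2, ha3⟩ := ih
      refine ⟨fun i => match i with
        | 0 => f * DF (a 0)
        | j + 1 => f * (DF (a (j + 1)) + a j), ?_, ?_, ?_⟩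
      · show f * (DF (a (fs.length + 1)) + a fs.length) = (f :: fs).prod
        rw [ha2 _ (Nat.lt_succ_self _), hDF0, zero_add, ha1, List.prod_cons]
      · intro i hi
        rw [List.length_cons] at hi
        match i, hi with
        | j + 1, hi =>
          show f * (DF (a (j + 1)) + a j) = 0
          rw [ha2 _ (by omega), ha2 _ (by omega), hDF0, add_zero, mul_zero]
      · intro η
        show algebraMap F E f * DE (Lop DE (fs.map (algebraMap F E)) η) = _
        rw [ha3 η, hDsum]
        have hterm : ∀ i, DE (algebraMap F E (a i) * DE^[i] η)
            = algebraMap F E (a i) * DE^[i + 1] η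
              + algebraMap F E (DF (a i)) * DE^[i] η := by
          intro i
          rw [hEmul, hcompat, Function.iterate_succ_apply', add_comm]
        simp only [hterm]
        rw [Finset.mul_sum]
        have hsplit : ∀ i ∈ Finset.range (fs.length + 1),
            algebraMap F E f * (algebraMap F E (a i) * DE^[i + 1] η
              + algebraMap F E (DF (a i)) * DE^[i] η)
            = algebraMap F E (f * a i) * DE^[i + 1] η
              + algebraMap F E (f * DF (a i)) * DE^[i] η := by
          intro i _
          rw [map_mul, map_mul]; ring
        rw [Finset.sum_congr rfl hsplit, Finset.sum_add_distrib]
        -- RHS manipulation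
        simp only [List.length_cons]
        rw [Finset.sum_range_succ' _ (fs.length + 1)]
        show _ = (∑ i ∈ Finset.range (fs.length + 1),
            algebraMap F E (f * (DF (a (i + 1)) + a i)) * DE^[i + 1] η)
          + algebraMap F E (f * DF (a 0)) * DE^[0] η
        have hsplit2 : ∀ i ∈ Finset.range (fs.length + 1),
            algebraMap F E (f * (DF (a (i + 1)) + a i)) * DE^[i + 1] η
            = algebraMap F E (f * DF (a (i + 1))) * DE^[i + 1] η
              + algebraMap F E (f * a i) * DE^[i + 1] η := by
          intro i _
          rw [map_mul, map_mul, map_mul, map_add]; ring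
        rw [Finset.sum_congr rfl hsplit2, Finset.sum_add_distrib]
        -- now: S1 + S2 = (T + S1) + g0 where S2 = T + g0
        have hS2 : (∑ i ∈ Finset.range (fs.length + 1),
              algebraMap F E (f * DF (a i)) * DE^[i] η)
            = (∑ i ∈ Finset.range (fs.length + 1),
              algebraMap F E (f * DF (a (i + 1))) * DE^[i + 1] η)
              + algebraMap F E (f * DF (a 0)) * DE^[0] η := by
          rw [Finset.sum_range_succ' (fun i => algebraMap F E (f * DF (a i)) * DE^[i] η)
            fs.length]
          congr 1
          rw [Finset.sum_range_succ]
          rw [ha2 _ (Nat.lt_succ_self _), hDF0, mul_zero, map_zero, zero_mul, add_zero]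
        rw [hS2]
        ring
end Aux

theorem stmt_8 (F E : Type*) [Field F] [Field E] [Algebra F E] [CharZero F]
    (DF : F → F)
    (hFadd : ∀ a b : F, DF (a + b) = DF a + DF b)
    (hFmul : ∀ a b : F, DF (a * b) = a * DF b + DF a * b)
    (DE : E → E)
    (hEadd : ∀ a b : E, DE (a + b) = DE a + DE b)
    (hEmul : ∀ a b : E, DE (a * b) = a * DE b + DE a * b)
    (hcompat : ∀ a : F, DE (algebraMap F E a) = algebraMap F E (DF a))
    -- the field of constants of F is algebraically closed
    (hCalg : ∀ p : Polynomial F, 0 < p.degree → (∀ i, DF (p.coeff i) = 0) →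
      ∃ r : F, DF r = 0 ∧ p.eval r = 0)
    -- E and F have the same constants
    (hconst : ∀ e : E, DE e = 0 → ∃ c : F, DF c = 0 ∧ algebraMap F E c = e)
    -- unipotent Galois group, via the standard characterization of T(E|F)
    (hunip : ∃ (n : ℕ) (η : Fin n → E),
      (∀ i : Fin n, DE (η i) ∈ Algebra.adjoin F (η '' {j | j < i})) ∧
      (∀ e : E, e ∈ Algebra.adjoin F (Set.range η) ↔ InPVRing DF DE e)) :
    ∀ e : E, InPVRing DF DE e ↔ IsGenIterInt (F := F) DE e := by
  intro e
  constructor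
  · intro he
    obtain ⟨n, η, hη, hTiff⟩ := hunip
    have hmem : e ∈ Algebra.adjoin F (Set.range η) := (hTiff e).mpr he
    have adj : ∀ s : Set E, (∀ x ∈ s, ∃ W, UF F DE W ∧ x ∈ W) →
        ∀ x ∈ Algebra.adjoin F s, ∃ W, UF F DE W ∧ x ∈ W := by
      intro s hs x hx
      induction hx using Algebra.adjoin_induction with
      | mem y hy => exact hs y hy
      | algebraMap r =>
          refine ⟨Submodule.span F {1}, ?_, ?_⟩
          · have h := UF.step (F := F) (DE := DE) ⊥ 1 UF.bot
              (by rw [DE_one DE hEmul]; exact Submodule.zero_mem _)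
            rwa [bot_sup_eq] at h
          · rw [Submodule.mem_span_singleton]
            exact ⟨r, (Algebra.algebraMap_eq_smul_one r).symm⟩
      | add x y hx hy ihx ihy =>
          obtain ⟨W₁, hW₁, hx₁⟩ := ihx
          obtain ⟨W₂, hW₂, hy₂⟩ := ihy
          exact ⟨W₁ ⊔ W₂, UF_sup DE hW₁ hW₂,
            add_mem (Submodule.mem_sup_left hx₁) (Submodule.mem_sup_right hy₂)⟩
      | mul x y hx hy ihx ihy =>
          obtain ⟨W₁, hW₁, hx₁⟩ := ihx
          obtain ⟨W₂, hW₂, hy₂⟩ := ihy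
          exact ⟨W₁ * W₂, UF_mul DE hEmul hW₁ hW₂, Submodule.mul_mem_mul hx₁ hy₂⟩
    have heta : ∀ m : ℕ, ∀ i : Fin n, (i : ℕ) < m → ∃ W, UF F DE W ∧ η i ∈ W := by
      intro m
      induction m with
      | zero => intro i hi; omega
      | succ m ihm =>
          intro i hi
          have hsub : ∀ x ∈ η '' {j | j < i}, ∃ W, UF F DE W ∧ x ∈ W := by
            rintro x ⟨j, hj, rfl⟩
            have hj' : (j : ℕ) < (i : ℕ) := hj
            exact ihm j (by omega)
          obtain ⟨W, hWUF, hDW⟩ := adj _ hsub _ (hη i)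
          exact ⟨W ⊔ Submodule.span F {η i}, UF.step W (η i) hWUF hDW,
            Submodule.mem_sup_right (Submodule.mem_span_singleton_self _)⟩
    have hall : ∀ x ∈ Set.range η, ∃ W, UF F DE W ∧ x ∈ W := by
      rintro x ⟨i, rfl⟩
      exact heta n i i.isLt
    obtain ⟨W, hWUF, heW⟩ := adj _ hall e hmem
    exact UF_gii DF DE hEadd hEmul hcompat W hWUF e heW
  · rintro ⟨fs, hne, hnz, hL⟩
    obtain ⟨a, ha1, ha2, ha3⟩ := Lop_expand DF DE hFadd hEadd hEmul hcompat fs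
    have hP : fs.prod ≠ 0 := List.prod_ne_zero (fun h => hnz 0 h rfl)
    refine ⟨fs.length, fun i => (fs.prod)⁻¹ * a i, ?_, ?_⟩
    · show fs.prod⁻¹ * a ((Fin.last fs.length : Fin (fs.length+1)) : ℕ) = 1
      rw [Fin.val_last, ha1, inv_mul_cancel₀ hP]
    · have hsum : ∑ i : Fin (fs.length + 1),
          algebraMap F E (a (i : ℕ)) * DE^[(i : ℕ)] e = 0 := by
        rw [Fin.sum_univ_eq_sum_range (fun i => algebraMap F E (a i) * DE^[i] e)]
        rw [← ha3 e]
        exact hL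
      calc ∑ i : Fin (fs.length + 1),
            algebraMap F E ((fs.prod)⁻¹ * a (i : ℕ)) * DE^[(i : ℕ)] e
          = algebraMap F E (fs.prod)⁻¹ * ∑ i : Fin (fs.length + 1),
              algebraMap F E (a (i : ℕ)) * DE^[(i : ℕ)] e := by
            rw [Finset.mul_sum]
            refine Finset.sum_congr rfl fun i _ => ?_
            rw [map_mul, mul_assoc]
        _ = 0 := by rw [hsum, mul_zero]
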